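/- Assume the source condition f_H = ℒ^ζ g₀ with ‖g₀‖_ρ ≤ R (ζ ≥ 0, R > 0). With λ > 0, ω_⋆^λ = G_λ(T) S_ρ* f_H (G_λ(u) = 1/u for u ≥ λ, 0 otherwise), P a projection onto a closed subspace of H, and the quantities Δ₁, Δ₂, Δ₄, Δ₅ as defined in the context, one has: ‖(T_x+λI)^{−1/2}(S_x* ȳ − T_x P ω_⋆^λ)‖_H ≤ Δ₁^{1/2} Δ₂ + Δ₁^{1/2} R (Δ₅+λ) λ^{ζ−1} if ζ ≤ 1, and ‖(T_x+λI)^{−1/2}(S_x* ȳ − T_x P ω_⋆^λ)‖_H ≤ Δ₁^{1/2} Δ₂ + Δ₁^{1/2} R (κΔ₄ + Δ₅) κ^{2(ζ−1)} if ζ > 1. -/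

import Mathlib

/-!
Statement 10: bound on `‖(T_x+λI)^{−1/2}(S_x* ȳ − T_x P ω_⋆^λ)‖_H` in terms of the
random quantities `Δ₁, Δ₂, Δ₄, Δ₅`, under the source condition.
-/

open MeasureTheory RealInnerProductSpace Polynomial

noncomputable section

/-- `p` encodes the real powers `s ↦ O ^ s` (for `s ≥ 0`) of the nonnegative
self-adjoint operator `O`, as given by the continuous functional calculus. -/
def IsPowers {E : Type*} [NormedAddCommGroup E] [InnerProductSpace ℝ E] [CompleteSpace E]
    (O : E →L[ℝ] E) (p : ℝ → E →L[ℝ] E) : Prop :=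
  p 0 = 1 ∧ p 1 = O ∧ (∀ s t : ℝ, 0 ≤ s → 0 ≤ t → p (s + t) = (p s).comp (p t)) ∧
    (∀ s : ℝ, 0 ≤ s → (p s).IsPositive) ∧ ContinuousOn p (Set.Ioi (0 : ℝ))


section AuxLemmas

set_option linter.unusedSectionVars false
set_option linter.unusedTactic false

variable {E : Type*} [NormedAddCommGroup E] [InnerProductSpace ℝ E] [CompleteSpace E]
variable {ι : Type*}

private lemma sa_symm {A : E →L[ℝ] E} (h : IsSelfAdjoint A) (x y : E) : ⟪A x, y⟫ = ⟪x, A y⟫ := by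
  conv_lhs => rw [← ContinuousLinearMap.isSelfAdjoint_iff'.mp h]
  exact ContinuousLinearMap.adjoint_inner_left A y x

private lemma clm_ext_basis (b : HilbertBasis ι ℝ E) {A B : E →L[ℝ] E}
    (h : ∀ i, A (b i) = B (b i)) : A = B := by
  refine ContinuousLinearMap.ext_on
    (Submodule.dense_iff_topologicalClosure_eq_top.mpr b.dense_span) ?_
  rintro x ⟨i, rfl⟩
  exact h i

private lemma diag_inner (b : HilbertBasis ι ℝ E) {f : ι → ℝ} {op : E →L[ℝ] E}
    (hop : ∀ i, op (b i) = f i • b i) (v : E) (i : ι) :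
    ⟪b i, op v⟫ = f i * ⟪b i, v⟫ := by
  classical
  have h1 : HasSum (fun j => b.repr v j • op (b j)) (op v) := by
    simpa only [_root_.map_smul] using (b.hasSum_repr v).mapL op
  have h2 : HasSum (fun j => (innerSL ℝ (b i)) (b.repr v j • op (b j))) ⟪b i, op v⟫ :=
    h1.mapL (innerSL ℝ (b i))
  have horth : ∀ i j : ι, ⟪b i, b j⟫ = if i = j then 1 else 0 :=
    orthonormal_iff_ite.mp b.orthonormal
  have h3 : ∀ j, (innerSL ℝ (b i)) (b.repr v j • op (b j)) =
      if j = i then f i * ⟪b i, v⟫ else 0 := by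
    intro j
    rcases eq_or_ne j i with rfl | hj
    · simp [hop, inner_smul_right, horth, b.repr_apply_apply, mul_comm,
        (b.orthonormal.1 : ∀ k, ‖b k‖ = 1)]
    · simp [hop, inner_smul_right, horth, hj, (Ne.symm hj)]
  rw [funext h3] at h2
  exact ((hasSum_ite_eq i (f i * ⟪b i, v⟫)).unique h2).symm

private lemma diag_hasSum_sq (b : HilbertBasis ι ℝ E) {f : ι → ℝ} {op : E →L[ℝ] E}
    (hop : ∀ i, op (b i) = f i • b i) (v : E) :
    HasSum (fun i => (f i * ⟪b i, v⟫) ^ 2) (‖op v‖ ^ 2) := by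
  have h := b.hasSum_inner_mul_inner (op v) (op v)
  rw [real_inner_self_eq_norm_sq] at h
  have h3 : ∀ i, ⟪op v, b i⟫ * ⟪b i, op v⟫ = (f i * ⟪b i, v⟫) ^ 2 := by
    intro i
    have e1 : ⟪b i, op v⟫ = f i * ⟪b i, v⟫ := diag_inner b hop v i
    have e2 : ⟪op v, b i⟫ = f i * ⟪b i, v⟫ := (real_inner_comm _ _).trans e1
    rw [e1, e2]; ring
  rwa [funext h3] at h

private lemma parseval (b : HilbertBasis ι ℝ E) (v : E) :
    HasSum (fun i => ⟪b i, v⟫ ^ 2) (‖v‖ ^ 2) := by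
  have := diag_hasSum_sq b (f := fun _ => (1:ℝ)) (op := 1) (fun i => by simp) v
  simpa using this

private lemma diag_norm_le (b : HilbertBasis ι ℝ E) {f g : ι → ℝ} {opf opg : E →L[ℝ] E}
    (hf : ∀ i, opf (b i) = f i • b i) (hg : ∀ i, opg (b i) = g i • b i)
    (hle : ∀ i, |f i| ≤ |g i|) (v : E) : ‖opf v‖ ≤ ‖opg v‖ := by
  have h1 := diag_hasSum_sq b hf v
  have h2 := diag_hasSum_sq b hg v
  have hsq : ‖opf v‖ ^ 2 ≤ ‖opg v‖ ^ 2 := by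
    refine hasSum_le (fun i => ?_) h1 h2
    have : (f i) ^ 2 ≤ (g i) ^ 2 := by
      rw [← sq_abs (f i), ← sq_abs (g i)]
      exact pow_le_pow_left₀ (abs_nonneg _) (hle i) 2
    calc (f i * ⟪b i, v⟫) ^ 2 = f i ^ 2 * ⟪b i, v⟫ ^ 2 := by ring
    _ ≤ g i ^ 2 * ⟪b i, v⟫ ^ 2 := by nlinarith [sq_nonneg (⟪b i, v⟫ : ℝ)]
    _ = (g i * ⟪b i, v⟫) ^ 2 := by ring
  exact (pow_le_pow_iff_left₀ (norm_nonneg _) (norm_nonneg _) two_ne_zero).mp hsq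

private lemma diag_norm_le_const (b : HilbertBasis ι ℝ E) {f : ι → ℝ} {op : E →L[ℝ] E}
    (hop : ∀ i, op (b i) = f i • b i) {C : ℝ} (hC0 : 0 ≤ C)
    (hC : ∀ i, |f i| ≤ C) (v : E) : ‖op v‖ ≤ C * ‖v‖ := by
  have h1 := diag_hasSum_sq b hop v
  have h2 := (parseval b v).mul_left (C ^ 2)
  have hsq : ‖op v‖ ^ 2 ≤ C ^ 2 * ‖v‖ ^ 2 := by
    refine hasSum_le (fun i => ?_) h1 h2
    have : (f i) ^ 2 ≤ C ^ 2 := by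
      rw [← sq_abs (f i)]
      exact pow_le_pow_left₀ (abs_nonneg _) (hC i) 2
    nlinarith [sq_nonneg (⟪b i, v⟫ : ℝ)]
  have h3 : ‖op v‖ ^ 2 ≤ (C * ‖v‖) ^ 2 := by nlinarith
  exact (pow_le_pow_iff_left₀ (norm_nonneg _) (by positivity) two_ne_zero).mp h3

private lemma diag_isSelfAdjoint (b : HilbertBasis ι ℝ E) {f : ι → ℝ} {op : E →L[ℝ] E}
    (hop : ∀ i, op (b i) = f i • b i) : IsSelfAdjoint op := by
  rw [ContinuousLinearMap.isSelfAdjoint_iff']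
  symm
  rw [ContinuousLinearMap.eq_adjoint_iff op op]
  intro x y
  have h1 : HasSum (fun i => ⟪op x, b i⟫ * ⟪b i, y⟫) ⟪op x, y⟫ := b.hasSum_inner_mul_inner _ _
  have h2 : HasSum (fun i => ⟪x, b i⟫ * ⟪b i, op y⟫) ⟪x, op y⟫ := b.hasSum_inner_mul_inner _ _
  have h3 : ∀ i, ⟪op x, b i⟫ * ⟪b i, y⟫ = ⟪x, b i⟫ * ⟪b i, op y⟫ := by
    intro i
    have e1 : ⟪op x, b i⟫ = f i * ⟪b i, x⟫ := (real_inner_comm _ _).trans (diag_inner b hop x i)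
    have e2 : ⟪b i, op y⟫ = f i * ⟪b i, y⟫ := diag_inner b hop y i
    have e3 : ⟪x, b i⟫ = ⟪b i, x⟫ := real_inner_comm _ _
    rw [e1, e2, e3]; ring
  rw [funext h3] at h1
  exact h1.unique h2

private lemma basis_ext (b : HilbertBasis ι ℝ E) {x y : E}
    (h : ∀ i, ⟪b i, x⟫ = ⟪b i, y⟫) : x = y := by
  apply b.repr.injective
  apply lp.ext
  funext i
  rw [b.repr_apply_apply, b.repr_apply_apply]
  exact h i

private lemma sqrt_eigen' {A : E →L[ℝ] E} (hnn : ∀ x, 0 ≤ ⟪A x, x⟫) {ν : ℝ} (hν : 0 < ν) {v : E}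
    (h : A (A v) = ν • v) : A v = Real.sqrt ν • v := by
  set u := A v - Real.sqrt ν • v with hu
  have hss : Real.sqrt ν * Real.sqrt ν = ν := Real.mul_self_sqrt hν.le
  have h1 : A u = (-(Real.sqrt ν)) • u := by
    rw [hu, map_sub, A.map_smul, h, neg_smul, smul_sub, smul_smul, hss]
    abel
  have h2 : 0 ≤ ⟪A u, u⟫ := hnn u
  rw [h1, real_inner_smul_left] at h2
  have h4 : ⟪u, u⟫ = 0 := by
    have h3 : (0:ℝ) ≤ ⟪u, u⟫ := real_inner_self_nonneg
    nlinarith [Real.sqrt_pos.mpr hν]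
  have h5 : u = 0 := by rwa [inner_self_eq_zero] at h4
  rw [hu, sub_eq_zero] at h5
  exact h5

end AuxLemmas

section MeasAux

variable {H : Type*} [NormedAddCommGroup H] [InnerProductSpace ℝ H] [CompleteSpace H]
    [SecondCountableTopology H] [MeasurableSpace H] [BorelSpace H]

set_option linter.unusedSectionVars false
set_option linter.unusedTactic false

private lemma ae_norm_le_of_inner_bound (ρX : Measure H) [IsProbabilityMeasure ρX]
    {κ : ℝ} (hκ : 1 ≤ κ) (hbound : ∀ᵐ x ∂ρX, ∀ᵐ x' ∂ρX, ⟪x, x'⟫ ≤ κ ^ 2) :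
    ∀ᵐ x ∂ρX, ‖x‖ ≤ κ := by
  have hmeas : MeasurableSet {p : H × H | κ ^ 2 < ⟪p.1, p.2⟫} :=
    measurableSet_lt measurable_const
      ((continuous_inner (𝕜 := ℝ) (E := H)).measurable)
  have hnull : (ρX.prod ρX) {p : H × H | κ ^ 2 < ⟪p.1, p.2⟫} = 0 := by
    rw [Measure.measure_prod_null hmeas]
    refine hbound.mono fun x hx => ?_
    show ρX (Prod.mk x ⁻¹' {p : H × H | κ ^ 2 < ⟪p.1, p.2⟫}) = 0
    have heq : Prod.mk x ⁻¹' {p : H × H | κ ^ 2 < ⟪p.1, p.2⟫}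
        = {x' : H | κ ^ 2 < ⟪x, x'⟫} := rfl
    rw [heq]
    rw [ae_iff] at hx
    simpa [not_le] using hx
  by_contra hcon
  rw [ae_iff] at hcon
  have hset : {x : H | ¬ ‖x‖ ≤ κ} = ⋃ n : ℕ, {x : H | κ + (1/((n:ℝ)+1)) ≤ ‖x‖} := by
    ext x
    simp only [Set.mem_setOf_eq, Set.mem_iUnion, not_le]
    constructor
    · intro hx
      obtain ⟨n, hn⟩ := exists_nat_one_div_lt (sub_pos.mpr hx)
      exact ⟨n, by push_cast at hn ⊢; linarith⟩
    · rintro ⟨n, hn⟩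
      have : (0:ℝ) < 1/((n:ℝ)+1) := by positivity
      linarith
  obtain ⟨n, hn⟩ : ∃ n : ℕ, ρX {x : H | κ + (1/((n:ℝ)+1)) ≤ ‖x‖} ≠ 0 := by
    by_contra hall
    push_neg at hall
    exact hcon (by rw [hset]; exact measure_iUnion_null fun n => hall n)
  set ε : ℝ := 1/((n:ℝ)+1) with hε
  have hε0 : 0 < ε := by positivity
  have hcover : {x : H | κ + ε ≤ ‖x‖} ⊆
      ⋃ k : ℕ, ({x : H | κ + ε ≤ ‖x‖} ∩ Metric.ball (TopologicalSpace.denseSeq H k) (ε/4)) := by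
    intro x hx
    obtain ⟨k, hk⟩ := Metric.denseRange_iff.mp (TopologicalSpace.denseRange_denseSeq H) x
      (ε/4) (by positivity)
    exact Set.mem_iUnion.mpr ⟨k, hx, by simpa [Metric.mem_ball, dist_comm] using hk⟩
  obtain ⟨k, hk⟩ : ∃ k : ℕ,
      ρX ({x : H | κ + ε ≤ ‖x‖} ∩ Metric.ball (TopologicalSpace.denseSeq H k) (ε/4)) ≠ 0 := by
    by_contra hall
    push_neg at hall
    exact hn (measure_mono_null hcover (measure_iUnion_null fun k => hall k))
  set z := TopologicalSpace.denseSeq H k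
  set A := {x : H | κ + ε ≤ ‖x‖} ∩ Metric.ball z (ε/4) with hA
  have hsub : A ×ˢ A ⊆ {p : H × H | κ ^ 2 < ⟪p.1, p.2⟫} := by
    rintro ⟨x, x'⟩ ⟨⟨hx1, hx2⟩, hx1', hx2'⟩
    simp only [Set.mem_setOf_eq] at hx1 hx1' ⊢
    rw [Metric.mem_ball] at hx2 hx2'
    have hdist : ‖x' - x‖ < 2 * (ε/4) := by
      rw [← dist_eq_norm]
      calc dist x' x ≤ dist x' z + dist x z := dist_triangle_right x' x z
        _ < ε/4 + ε/4 := add_lt_add hx2' hx2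
        _ = 2 * (ε/4) := by ring
    have hexp : ⟪x, x'⟫ = ‖x‖ ^ 2 + ⟪x, x' - x⟫ := by
      rw [← real_inner_self_eq_norm_sq, ← inner_add_right]
      congr 1
      abel
    have habs : |⟪x, x' - x⟫| ≤ ‖x‖ * ‖x' - x‖ := abs_real_inner_le_norm x (x' - x)
    have hxpos : (0:ℝ) < ‖x‖ := by nlinarith
    have h1 : ‖x‖ * ‖x' - x‖ < ‖x‖ * (2 * (ε/4)) :=
      mul_lt_mul_of_pos_left hdist hxpos
    rw [hexp]
    nlinarith [abs_nonneg (⟪x, x' - x⟫ : ℝ), neg_abs_le (⟪x, x' - x⟫ : ℝ),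
      mul_nonneg (sub_nonneg.mpr hx1) (show (0:ℝ) ≤ ‖x‖ + (κ + ε) - 2 * (ε/4) by nlinarith)]
  have hAA : (ρX.prod ρX) (A ×ˢ A) = 0 := measure_mono_null hsub hnull
  rw [Measure.prod_prod] at hAA
  exact hk (mul_self_eq_zero.mp hAA)

end MeasAux

section PowersAux

variable {E : Type*} [NormedAddCommGroup E] [InnerProductSpace ℝ E] [CompleteSpace E]

private lemma isPowers_eigen {O : E →L[ℝ] E} {p : ℝ → E →L[ℝ] E} (hp : IsPowers O p)
    {μ : ℝ} (hμ : 0 < μ) {v : E} (hv : O v = μ • v) {s : ℝ} (hs : 0 ≤ s) :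
    p s v = μ ^ s • v := by
  obtain ⟨hp0, hp1, hadd, hpos, hcont⟩ := hp
  have hnn : ∀ t : ℝ, 0 ≤ t → ∀ x : E, 0 ≤ ⟪(p t) x, x⟫ := by
    intro t ht x
    have := (hpos t ht).2 x
    simpa [ContinuousLinearMap.reApplyInnerSelf_apply] using this
  have hdy : ∀ n : ℕ, p ((1/2 : ℝ)^n) v = (μ ^ ((1/2:ℝ)^n)) • v := by
    intro n; induction n with
    | zero => simpa [hp1] using hv
    | succ n ih =>
      have h2 : (0:ℝ) ≤ (1/2:ℝ)^(n+1) := by positivity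
      have hcomp : (p ((1/2:ℝ)^(n+1))).comp (p ((1/2:ℝ)^(n+1))) = p ((1/2:ℝ)^n) := by
        rw [← hadd _ _ h2 h2]
        congr 1
        ring
      have hAA : (p ((1/2:ℝ)^(n+1))) ((p ((1/2:ℝ)^(n+1))) v) = (μ ^ ((1/2:ℝ)^n)) • v := by
        have h' := congrArg (fun (B : E →L[ℝ] E) => B v) hcomp
        simp only [ContinuousLinearMap.comp_apply] at h'
        rw [h', ih]
      have := sqrt_eigen' (hnn _ h2) (Real.rpow_pos_of_pos hμ _) hAA
      rw [this]
      congr 1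
      rw [Real.sqrt_eq_rpow, ← Real.rpow_mul hμ.le, pow_succ]
  have hmul : ∀ (m n : ℕ), p ((m : ℝ) * (1/2:ℝ)^n) v = (μ ^ ((m:ℝ) * (1/2:ℝ)^n)) • v := by
    intro m n; induction m with
    | zero => simp [hp0]
    | succ m ih =>
      have hq : (0:ℝ) ≤ (1/2:ℝ)^n := by positivity
      have hrw : ((m:ℝ)+1) * (1/2:ℝ)^n = (1/2:ℝ)^n + (m:ℝ) * (1/2:ℝ)^n := by ring
      push_cast
      rw [hrw, hadd _ _ hq (by positivity)]
      have h5 : (p ((1/2:ℝ)^n)) ((p ((m:ℝ) * (1/2:ℝ)^n)) v)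
          = (μ ^ ((1/2:ℝ)^n) * μ ^ ((m:ℝ) * (1/2:ℝ)^n)) • v := by
        rw [ih, _root_.map_smul, hdy n, smul_smul, mul_comm]
      rw [ContinuousLinearMap.comp_apply, h5, ← Real.rpow_add hμ]
  rcases eq_or_lt_of_le hs with heq | hs'
  · rw [← heq, hp0]; simp
  · set aseq : ℕ → ℝ := fun n => (⌈s * 2^n⌉₊ : ℝ) * (1/2:ℝ)^n with ha
    have haval : ∀ n, p (aseq n) v = μ ^ (aseq n) • v := fun n => hmul _ n
    have hpow : ∀ n : ℕ, (2:ℝ)^n * (1/2:ℝ)^n = 1 := by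
      intro n
      rw [← mul_pow]
      norm_num
    have h_ge : ∀ n, s ≤ aseq n := by
      intro n
      have h1 : s * 2^n ≤ (⌈s * 2^n⌉₊ : ℝ) := Nat.le_ceil _
      have h2 := mul_le_mul_of_nonneg_right h1 (show (0:ℝ) ≤ (1/2:ℝ)^n by positivity)
      calc s = s * ((2:ℝ)^n * (1/2:ℝ)^n) := by rw [hpow]; ring
        _ = s * 2^n * (1/2:ℝ)^n := by ring
        _ ≤ aseq n := h2
    have h_lt : ∀ n, aseq n ≤ s + (1/2:ℝ)^n := by
      intro n
      have h1 : (⌈s * 2^n⌉₊ : ℝ) ≤ s * 2^n + 1 :=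
        (Nat.ceil_lt_add_one (by positivity)).le
      have h2 := mul_le_mul_of_nonneg_right h1 (show (0:ℝ) ≤ (1/2:ℝ)^n by positivity)
      calc aseq n ≤ (s * 2^n + 1) * (1/2:ℝ)^n := h2
        _ = s * ((2:ℝ)^n * (1/2:ℝ)^n) + (1/2:ℝ)^n := by ring
        _ = s + (1/2:ℝ)^n := by rw [hpow]; ring
    have hhalf : Filter.Tendsto (fun n : ℕ => (1/2:ℝ)^n) Filter.atTop (nhds 0) :=
      tendsto_pow_atTop_nhds_zero_of_lt_one (by norm_num) (by norm_num)
    have hlim : Filter.Tendsto aseq Filter.atTop (nhds s) := by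
      refine tendsto_of_tendsto_of_tendsto_of_le_of_le
        (tendsto_const_nhds) ?_ h_ge h_lt
      simpa using Filter.Tendsto.add (tendsto_const_nhds (x := s)) hhalf
    have hca : ContinuousAt p s := hcont.continuousAt (isOpen_Ioi.mem_nhds hs')
    have h1 : Filter.Tendsto (fun n => (p (aseq n)) v) Filter.atTop (nhds ((p s) v)) := by
      have h0 : Filter.Tendsto (fun n => p (aseq n)) Filter.atTop (nhds (p s)) :=
        hca.tendsto.comp hlim
      exact ((ContinuousLinearMap.apply ℝ E v).continuous.tendsto (p s)).comp h0
    have h2 : Filter.Tendsto (fun n => μ ^ (aseq n) • v) Filter.atTop (nhds (μ ^ s • v)) := by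
      have h3 : Filter.Tendsto (fun n => μ ^ (aseq n)) Filter.atTop (nhds (μ ^ s)) :=
        ((Real.continuousAt_const_rpow (ne_of_gt hμ)).tendsto).comp hlim
      exact h3.smul_const v
    have h1' : Filter.Tendsto (fun n => μ ^ (aseq n) • v) Filter.atTop (nhds ((p s) v)) := by
      rw [← funext haval]
      exact h1
    exact tendsto_nhds_unique h1' h2

end PowersAux


set_option maxHeartbeats 2000000 in
theorem sample_projection_error_bound
    {H : Type*} [NormedAddCommGroup H] [InnerProductSpace ℝ H] [CompleteSpace H]
    [SecondCountableTopology H] [MeasurableSpace H] [BorelSpace H]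
    (n : ℕ) (hn : 0 < n)
    -- the marginal distribution
    (ρX : Measure H) [IsProbabilityMeasure ρX]
    (hsupp : ∃ K : Set H, IsCompact K ∧ ρX Kᶜ = 0)
    (κ : ℝ) (hκ : 1 ≤ κ)
    (hbound : ∀ᵐ x ∂ρX, ∀ᵐ x' ∂ρX, ⟪x, x'⟫ ≤ κ ^ 2)
    -- `S_ρ`, the covariance operator `T`, and the integral operator `ℒ`
    (Sρ : H →L[ℝ] Lp ℝ 2 ρX)
    (hSρ : ∀ v : H, (Sρ v : H → ℝ) =ᵐ[ρX] (fun x => ⟪v, x⟫))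
    (T : H →L[ℝ] H) (hT : T = (ContinuousLinearMap.adjoint Sρ).comp Sρ)
    (Lop : Lp ℝ 2 ρX →L[ℝ] Lp ℝ 2 ρX)
    (hLop : Lop = Sρ.comp (ContinuousLinearMap.adjoint Sρ))
    -- `f_H`, the projection of the regression function onto the hypothesis space
    (fρL fH : Lp ℝ 2 ρX)
    (hfHmem : fH ∈ (LinearMap.range (Sρ : H →ₗ[ℝ] Lp ℝ 2 ρX)).topologicalClosure)
    (hfHproj : ∀ v : H, ⟪fρL - fH, Sρ v⟫ = 0)
    -- the source condition `f_H = ℒ^ζ g₀`, `‖g₀‖_ρ ≤ R`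
    (ζ R : ℝ) (hζ : 0 ≤ ζ) (hR : 0 < R)
    (Lpow : ℝ → Lp ℝ 2 ρX →L[ℝ] Lp ℝ 2 ρX) (hLpow : IsPowers Lop Lpow)
    (g₀ : Lp ℝ 2 ρX) (hg₀ : ‖g₀‖ ≤ R) (hsource : fH = Lpow ζ g₀)
    -- an orthonormal eigendecomposition of `T`
    {ι : Type*} (e : HilbertBasis ι ℝ H) (μT : ι → ℝ) (hμT : ∀ i, 0 ≤ μT i)
    (hTe : ∀ i, T (e i) = μT i • e i)
    -- the regularization parameter and `ω_⋆^λ = G_λ(T) S_ρ* f_H`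
    (lam : ℝ) (hlam : 0 < lam)
    (ωstar : H)
    (hωstar : ∀ i, ⟪ωstar, e i⟫ =
      if lam ≤ μT i then (μT i)⁻¹ * ⟪(ContinuousLinearMap.adjoint Sρ) fH, e i⟫ else 0)
    -- the fixed sample, sampling operator and empirical covariance operator
    (x : Fin n → H) (hx : ∀ i, ⟪x i, x i⟫ ≤ κ ^ 2) (y : Fin n → ℝ)
    (Sx : H →L[ℝ] EuclideanSpace ℝ (Fin n))
    (hSx : ∀ v i, Sx v i = (Real.sqrt n)⁻¹ * ⟪v, x i⟫)
    (ybar : EuclideanSpace ℝ (Fin n)) (hybar : ∀ i, ybar i = (Real.sqrt n)⁻¹ * y i)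
    (Tx : H →L[ℝ] H) (hTx : Tx = (ContinuousLinearMap.adjoint Sx).comp Sx)
    {ι' : Type*} (ex : HilbertBasis ι' ℝ H) (μx : ι' → ℝ) (hμx : ∀ j, 0 ≤ μx j)
    (hTxe : ∀ j, Tx (ex j) = μx j • ex j)
    -- the projection `P` onto a closed subspace of `H`
    (P : H →L[ℝ] H) (hPsa : IsSelfAdjoint P) (hPidem : P.comp P = P)
    -- fractional powers of `T`, `T+λI` and `T_x+λI` (via the eigenbases)
    (sT : H →L[ℝ] H) (hsT : ∀ i, sT (e i) = Real.sqrt (μT i) • e i)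
    (sTlam : H →L[ℝ] H) (hsTlam : ∀ i, sTlam (e i) = Real.sqrt (μT i + lam) • e i)
    (rTlam : H →L[ℝ] H) (hrTlam : ∀ i, rTlam (e i) = (Real.sqrt (μT i + lam))⁻¹ • e i)
    (sTxlam : H →L[ℝ] H) (hsTxlam : ∀ j, sTxlam (ex j) = Real.sqrt (μx j + lam) • ex j)
    (rTxlam : H →L[ℝ] H) (hrTxlam : ∀ j, rTxlam (ex j) = (Real.sqrt (μx j + lam))⁻¹ • ex j)
    -- the random quantities `Δ₁,…,Δ₅`
    (Δ1 : ℝ) (hΔ1 : Δ1 = max 1 (max (‖rTxlam.comp sTlam‖ ^ 2) (‖sTxlam.comp rTlam‖ ^ 2)))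
    (Δ2 : ℝ) (hΔ2 : Δ2 = ‖rTlam (Tx ωstar - (ContinuousLinearMap.adjoint Sx) ybar)‖)
    (Δ3 : ℝ) (hΔ3 : Δ3 = Real.sqrt (∑' i, ‖(Tx - T) (e i)‖ ^ 2))
    (Δ4 : ℝ) (hΔ4 : Δ4 = ‖rTlam.comp (T - Tx)‖)
    (Δ5 : ℝ) (hΔ5 : Δ5 = ‖sT.comp (1 - P)‖ ^ 2) :
    ((ζ ≤ 1 →
      ‖rTxlam ((ContinuousLinearMap.adjoint Sx) ybar - Tx (P ωstar))‖ ≤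
        Δ1 ^ (1 / 2 : ℝ) * Δ2 + Δ1 ^ (1 / 2 : ℝ) * R * (Δ5 + lam) * lam ^ (ζ - 1)) ∧
    (1 < ζ →
      ‖rTxlam ((ContinuousLinearMap.adjoint Sx) ybar - Tx (P ωstar))‖ ≤
        Δ1 ^ (1 / 2 : ℝ) * Δ2 +
          Δ1 ^ (1 / 2 : ℝ) * R * (κ * Δ4 + Δ5) * κ ^ (2 * (ζ - 1)))) := by
  classical
  have hκ0 : (0:ℝ) < κ := lt_of_lt_of_le one_pos hκ
  have hsq2 : ∀ i, (0:ℝ) < μT i + lam := fun i => by have := hμT i; linarith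
  have hsqx : ∀ j, (0:ℝ) < μx j + lam := fun j => by have := hμx j; linarith
  -- Δ1 bounds
  have hΔ1nn : (0:ℝ) ≤ Δ1 := by rw [hΔ1]; positivity
  have hΔ1half : ∀ A : H →L[ℝ] H, ‖A‖ ^ 2 ≤ Δ1 → ‖A‖ ≤ Δ1 ^ (1/2 : ℝ) := by
    intro A hA
    have h0 : ‖A‖ = (‖A‖ ^ 2) ^ (1/2 : ℝ) := by
      rw [← Real.rpow_natCast ‖A‖ 2, ← Real.rpow_mul (norm_nonneg _)]
      norm_num
    rw [h0]
    exact Real.rpow_le_rpow (by positivity) hA (by norm_num)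
  have hrs : ‖rTxlam.comp sTlam‖ ≤ Δ1 ^ (1/2 : ℝ) :=
    hΔ1half _ (hΔ1 ▸ (le_max_left _ _).trans (le_max_right _ _))
  have hsr : ‖sTxlam.comp rTlam‖ ≤ Δ1 ^ (1/2 : ℝ) :=
    hΔ1half _ (hΔ1 ▸ (le_max_right _ _).trans (le_max_right _ _))
  have hΔ1pos : (0:ℝ) ≤ Δ1 ^ (1/2 : ℝ) := Real.rpow_nonneg hΔ1nn _
  -- inverse identities
  have hsr1 : sTlam.comp rTlam = 1 := by
    refine clm_ext_basis e fun i => ?_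
    have h0 : Real.sqrt (μT i + lam) ≠ 0 := ne_of_gt (Real.sqrt_pos.mpr (hsq2 i))
    rw [ContinuousLinearMap.comp_apply, hrTlam, _root_.map_smul, hsTlam, smul_smul,
      inv_mul_cancel₀ h0, one_smul, ContinuousLinearMap.one_apply]
  have hrs1 : rTlam.comp sTlam = 1 := by
    refine clm_ext_basis e fun i => ?_
    have h0 : Real.sqrt (μT i + lam) ≠ 0 := ne_of_gt (Real.sqrt_pos.mpr (hsq2 i))
    rw [ContinuousLinearMap.comp_apply, hsTlam, _root_.map_smul, hrTlam, smul_smul,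
      mul_inv_cancel₀ h0, one_smul, ContinuousLinearMap.one_apply]
  have key1 : ∀ w : H, ‖rTxlam w‖ ≤ Δ1 ^ (1/2 : ℝ) * ‖rTlam w‖ := by
    intro w
    have hw : rTxlam w = (rTxlam.comp sTlam) (rTlam w) := by
      rw [ContinuousLinearMap.comp_apply]
      have h' := congrArg (fun (B : H →L[ℝ] H) => B w) hsr1
      simp only [ContinuousLinearMap.comp_apply, ContinuousLinearMap.one_apply] at h'
      rw [h']
    rw [hw]
    calc ‖(rTxlam.comp sTlam) (rTlam w)‖ ≤ ‖rTxlam.comp sTlam‖ * ‖rTlam w‖ :=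
        ContinuousLinearMap.le_opNorm _ _
      _ ≤ Δ1 ^ (1/2 : ℝ) * ‖rTlam w‖ := mul_le_mul_of_nonneg_right hrs (norm_nonneg _)
  have key2 : ∀ w : H, ‖sTxlam w‖ ≤ Δ1 ^ (1/2 : ℝ) * ‖sTlam w‖ := by
    intro w
    have hw : sTxlam w = (sTxlam.comp rTlam) (sTlam w) := by
      rw [ContinuousLinearMap.comp_apply]
      have h' := congrArg (fun (B : H →L[ℝ] H) => B w) hrs1
      simp only [ContinuousLinearMap.comp_apply, ContinuousLinearMap.one_apply] at h'
      rw [h']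
    rw [hw]
    calc ‖(sTxlam.comp rTlam) (sTlam w)‖ ≤ ‖sTxlam.comp rTlam‖ * ‖sTlam w‖ :=
        ContinuousLinearMap.le_opNorm _ _
      _ ≤ Δ1 ^ (1/2 : ℝ) * ‖sTlam w‖ := mul_le_mul_of_nonneg_right hsr (norm_nonneg _)
  -- eigenvalue comparison lemmas
  have hTxdiag : ∀ j, (rTxlam.comp Tx) (ex j) =
      ((Real.sqrt (μx j + lam))⁻¹ * μx j) • ex j := by
    intro j
    rw [ContinuousLinearMap.comp_apply, hTxe, _root_.map_smul, hrTxlam, smul_smul, mul_comm]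
  have cmp_x : ∀ v : H, ‖rTxlam (Tx v)‖ ≤ ‖sTxlam v‖ := by
    intro v
    have h := diag_norm_le ex hTxdiag hsTxlam (fun j => ?_) v
    · simpa using h
    · have hs0 : (0:ℝ) < Real.sqrt (μx j + lam) := Real.sqrt_pos.mpr (hsqx j)
      have h1 : Real.sqrt (μx j + lam) * Real.sqrt (μx j + lam) = μx j + lam :=
        Real.mul_self_sqrt (hsqx j).le
      rw [abs_of_nonneg (mul_nonneg (inv_nonneg.mpr (Real.sqrt_nonneg _)) (hμx j)),
        abs_of_nonneg hs0.le]
      calc (Real.sqrt (μx j + lam))⁻¹ * μx j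
          ≤ (Real.sqrt (μx j + lam))⁻¹ * (μx j + lam) := by
            apply mul_le_mul_of_nonneg_left (by linarith) (by positivity)
        _ = Real.sqrt (μx j + lam) := by
            rw [eq_comm, eq_inv_mul_iff_mul_eq₀ hs0.ne', h1]
  have hTdiag : ∀ i, (rTlam.comp T) (e i) =
      ((Real.sqrt (μT i + lam))⁻¹ * μT i) • e i := by
    intro i
    rw [ContinuousLinearMap.comp_apply, hTe, _root_.map_smul, hrTlam, smul_smul, mul_comm]
  have cmp_T : ∀ v : H, ‖rTlam (T v)‖ ≤ ‖sT v‖ := by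
    intro v
    have h := diag_norm_le e hTdiag hsT (fun i => ?_) v
    · simpa using h
    · have hs0 : (0:ℝ) < Real.sqrt (μT i + lam) := Real.sqrt_pos.mpr (hsq2 i)
      have hmono : Real.sqrt (μT i) ≤ Real.sqrt (μT i + lam) :=
        Real.sqrt_le_sqrt (by linarith)
      have hss : Real.sqrt (μT i) * Real.sqrt (μT i) = μT i := Real.mul_self_sqrt (hμT i)
      rw [abs_of_nonneg (mul_nonneg (inv_nonneg.mpr (Real.sqrt_nonneg _)) (hμT i)),
        abs_of_nonneg (Real.sqrt_nonneg _)]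
      rw [inv_mul_le_iff₀ hs0]
      nlinarith [Real.sqrt_nonneg (μT i)]
  -- Parseval splitting
  have split : ∀ u : H, ‖sTlam u‖ ^ 2 = ‖sT u‖ ^ 2 + lam * ‖u‖ ^ 2 := by
    intro u
    have hs1 := diag_hasSum_sq e hsTlam u
    have hs2 := diag_hasSum_sq e hsT u
    have hs3 := (parseval e u).mul_left lam
    have hs4 := hs2.add hs3
    refine hs1.unique ?_
    have hterm : ∀ i, (Real.sqrt (μT i) * ⟪e i, u⟫) ^ 2 + lam * ⟪e i, u⟫ ^ 2
        = (Real.sqrt (μT i + lam) * ⟪e i, u⟫) ^ 2 := by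
      intro i
      rw [mul_pow, mul_pow, Real.sq_sqrt (hsq2 i).le, Real.sq_sqrt (hμT i)]
      ring
    rw [← funext hterm]
    exact hs4
  -- projection facts
  set Q : H →L[ℝ] H := 1 - P with hQdef
  have hPP : ∀ v : H, P (P v) = P v := by
    intro v
    have := congrArg (fun (B : H →L[ℝ] H) => B v) hPidem
    simpa using this
  have hQQ : ∀ v : H, Q (Q v) = Q v := by
    intro v
    simp only [hQdef, ContinuousLinearMap.sub_apply, ContinuousLinearMap.one_apply, map_sub,
      ContinuousLinearMap.coe_sub', Pi.sub_apply]
    rw [hPP]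
    abel
  have hQsa : IsSelfAdjoint Q := by
    rw [hQdef]
    show star ((1:H →L[ℝ] H) - P) = (1:H →L[ℝ] H) - P
    rw [star_sub, star_one, hPsa.star_eq]
  have hQcontr : ∀ v : H, ‖Q v‖ ≤ ‖v‖ := by
    intro v
    have h1 : ⟪Q v, Q v⟫ = ⟪v, Q (Q v)⟫ := sa_symm hQsa v (Q v)
    rw [hQQ] at h1
    have h2 : ⟪v, Q v⟫ ≤ ‖v‖ * ‖Q v‖ := real_inner_le_norm v (Q v)
    have h3 : ⟪Q v, Q v⟫ = ‖Q v‖ ^ 2 := real_inner_self_eq_norm_sq _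
    nlinarith [norm_nonneg (Q v), norm_nonneg v]
  have hsTsa : IsSelfAdjoint sT := diag_isSelfAdjoint e hsT
  have hQsT : ‖Q.comp sT‖ = ‖sT.comp Q‖ := by
    have hadj : ContinuousLinearMap.adjoint (sT.comp Q) = Q.comp sT := by
      rw [ContinuousLinearMap.adjoint_comp, ContinuousLinearMap.isSelfAdjoint_iff'.mp hQsa,
        ContinuousLinearMap.isSelfAdjoint_iff'.mp hsTsa]
    rw [← hadj]
    exact ContinuousLinearMap.adjoint.norm_map (sT.comp Q)
  set N5 : ℝ := ‖sT.comp Q‖ with hN5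
  have hΔ5N : Δ5 = N5 ^ 2 := hΔ5
  -- the a.e. norm bound and eigenvalue bound
  have haex : ∀ᵐ x ∂ρX, ‖x‖ ≤ κ := ae_norm_le_of_inner_bound ρX hκ hbound
  have hone : ∀ i, ⟪e i, e i⟫ = (1:ℝ) := by
    intro i
    have := orthonormal_iff_ite.mp e.orthonormal i i
    simpa using this
  have hST : ∀ w : H, (ContinuousLinearMap.adjoint Sρ) (Sρ w) = T w := by
    intro w; rw [hT]; rfl
  have hSee : ∀ i j : ι, ⟪Sρ (e i), Sρ (e j)⟫ = μT i * ⟪e i, e j⟫ := by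
    intro i j
    rw [← ContinuousLinearMap.adjoint_inner_left Sρ (e j) (Sρ (e i)), hST, hTe,
      real_inner_smul_left]
  have hμκ : ∀ i, μT i ≤ κ ^ 2 := by
    intro i
    have h2 : ⟪Sρ (e i), Sρ (e i)⟫ = μT i := by rw [hSee i i, hone]; ring
    have h1 : (μT i : ℝ) = ∫ x, (Sρ (e i) : H → ℝ) x * (Sρ (e i) : H → ℝ) x ∂ρX := by
      rw [← h2, L2.inner_def]
      congr 1
    have hInt : Integrable (fun x => (Sρ (e i) : H → ℝ) x * (Sρ (e i) : H → ℝ) x) ρX := by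
      have := L2.integrable_inner (𝕜 := ℝ) (Sρ (e i)) (Sρ (e i))
      simpa [pow_two] using this
    have hbd : ∀ᵐ x ∂ρX,
        (Sρ (e i) : H → ℝ) x * (Sρ (e i) : H → ℝ) x ≤ κ ^ 2 := by
      filter_upwards [haex, hSρ (e i)] with x hx hfx
      rw [hfx]
      have h3 : |⟪e i, x⟫| ≤ ‖x‖ := by
        have h4 := abs_real_inner_le_norm (e i) x
        have h5 : ‖e i‖ = 1 := e.orthonormal.1 i
        rw [h5, one_mul] at h4
        exact h4
      have h6 : |⟪e i, x⟫| ≤ κ := h3.trans hx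
      nlinarith [abs_nonneg (⟪e i, x⟫ : ℝ), le_abs_self (⟪e i, x⟫ : ℝ),
        neg_abs_le (⟪e i, x⟫ : ℝ)]
    calc (μT i : ℝ) = ∫ x, (Sρ (e i) : H → ℝ) x * (Sρ (e i) : H → ℝ) x ∂ρX := h1
      _ ≤ ∫ _, κ ^ 2 ∂ρX := integral_mono_ae hInt (integrable_const _) hbd
      _ = κ ^ 2 := by simp [measure_univ]
  -- source condition coefficient computation
  have hLopeig : ∀ i, Lop (Sρ (e i)) = μT i • Sρ (e i) := by
    intro i
    rw [hLop, ContinuousLinearMap.comp_apply, hST, hTe, _root_.map_smul]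
  have hLpowSA : IsSelfAdjoint (Lpow ζ) := (hLpow.2.2.2.1 ζ hζ).isSelfAdjoint
  have hcoefSfH : ∀ i, 0 < μT i →
      ⟪(ContinuousLinearMap.adjoint Sρ) fH, e i⟫ = (μT i) ^ ζ * ⟪g₀, Sρ (e i)⟫ := by
    intro i hi
    rw [ContinuousLinearMap.adjoint_inner_left Sρ (e i) fH, hsource,
      sa_symm hLpowSA g₀ (Sρ (e i)), isPowers_eigen hLpow hi (hLopeig i) hζ,
      inner_smul_right]
  set c : ι → ℝ := fun i => (Real.sqrt (μT i))⁻¹ * ⟪g₀, Sρ (e i)⟫ with hcdef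
  have hωc : ∀ i, ⟪e i, ωstar⟫ =
      if lam ≤ μT i then ((μT i) ^ (ζ - 1) * Real.sqrt (μT i)) * c i else 0 := by
    intro i
    rw [real_inner_comm, hωstar i]
    by_cases hi : lam ≤ μT i
    · rw [if_pos hi, if_pos hi]
      have hipos : 0 < μT i := lt_of_lt_of_le hlam hi
      have hi0 : μT i ≠ 0 := ne_of_gt hipos
      have hs0 : Real.sqrt (μT i) ≠ 0 := ne_of_gt (Real.sqrt_pos.mpr hipos)
      rw [hcoefSfH i hipos, hcdef]
      simp only []
      have hstep : ((μT i) ^ (ζ - 1) * Real.sqrt (μT i)) *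
          ((Real.sqrt (μT i))⁻¹ * ⟪g₀, Sρ (e i)⟫)
          = (μT i) ^ (ζ - 1) * ⟪g₀, Sρ (e i)⟫ := by
        rw [mul_assoc, ← mul_assoc (Real.sqrt (μT i)), mul_inv_cancel₀ hs0, one_mul]
      rw [hstep, Real.rpow_sub hipos, Real.rpow_one]
      field_simp
    · rw [if_neg hi, if_neg hi]
  -- Bessel
  have horthofam : Orthonormal ℝ
      (fun i : {i : ι // lam ≤ μT i} => (Real.sqrt (μT i.1))⁻¹ • Sρ (e i.1)) := by
    rw [orthonormal_iff_ite]
    intro i j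
    rw [real_inner_smul_left, real_inner_smul_right, hSee]
    by_cases hij : i = j
    · subst hij
      rw [if_pos rfl, hone]
      have hipos : 0 < μT i.1 := lt_of_lt_of_le hlam i.2
      have hss : Real.sqrt (μT i.1) * Real.sqrt (μT i.1) = μT i.1 :=
        Real.mul_self_sqrt hipos.le
      have hs0 : Real.sqrt (μT i.1) ≠ 0 := ne_of_gt (Real.sqrt_pos.mpr hipos)
      field_simp; rw [Real.sq_sqrt hipos.le]
    · rw [if_neg hij]
      have hne : i.1 ≠ j.1 := fun h => hij (Subtype.ext h)
      have := orthonormal_iff_ite.mp e.orthonormal i.1 j.1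
      rw [if_neg hne] at this
      rw [this]
      ring
  have hinnerc : ∀ i : {i : ι // lam ≤ μT i},
      ⟪(Real.sqrt (μT i.1))⁻¹ • Sρ (e i.1), g₀⟫ = c i.1 := by
    intro i
    rw [real_inner_smul_left, hcdef]
    simp only []
    rw [real_inner_comm]
  have hBesselS : Summable (fun i : {i : ι // lam ≤ μT i} => (c i.1) ^ 2) := by
    have h := horthofam.inner_products_summable g₀
    refine h.congr fun i => ?_
    rw [hinnerc i, Real.norm_eq_abs, sq_abs]
  have hBesselB : ∑' (i : {i : ι // lam ≤ μT i}), (c i.1) ^ 2 ≤ R ^ 2 := by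
    have h := horthofam.tsum_inner_products_le g₀
    have heq : ∑' (i : {i : ι // lam ≤ μT i}), (c i.1) ^ 2
        = ∑' (i : {i : ι // lam ≤ μT i}),
          ‖⟪(Real.sqrt (μT i.1))⁻¹ • Sρ (e i.1), g₀⟫‖ ^ 2 := by
      refine tsum_congr fun i => ?_
      rw [hinnerc i, Real.norm_eq_abs, sq_abs]
    rw [heq]
    refine h.trans ?_
    have := pow_le_pow_left₀ (norm_nonneg g₀) hg₀ 2
    exact this
  -- construct the vector h'' with sT h'' = ωstar
  set a : ι → ℝ := fun i => if lam ≤ μT i then (μT i) ^ (ζ - 1) * c i else 0 with hadef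
  set M : ℝ := max (lam ^ (ζ - 1)) (κ ^ (2 * (ζ - 1))) with hMdef
  have hMbd : ∀ i, lam ≤ μT i → (μT i) ^ (ζ - 1) ≤ M := by
    intro i hi
    have hipos : 0 < μT i := lt_of_lt_of_le hlam hi
    rcases le_or_gt ζ 1 with hz | hz
    · refine le_trans ?_ (le_max_left _ _)
      exact Real.rpow_le_rpow_of_nonpos hlam hi (by linarith)
    · refine le_trans ?_ (le_max_right _ _)
      have h1 : (μT i) ^ (ζ - 1) ≤ (κ ^ 2) ^ (ζ - 1) :=
        Real.rpow_le_rpow (hμT i) (hμκ i) (by linarith)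
      refine h1.trans (le_of_eq ?_)
      rw [← Real.rpow_natCast κ 2, ← Real.rpow_mul hκ0.le]
      norm_num
  have hMnn : (0:ℝ) ≤ M := le_max_of_le_left (Real.rpow_nonneg hlam.le _)
  have haptbd : ∀ i, a i ^ 2 ≤
      M ^ 2 * Set.indicator {i : ι | lam ≤ μT i} (fun i => c i ^ 2) i := by
    intro i
    by_cases hi : lam ≤ μT i
    · rw [Set.indicator_of_mem (by exact hi : i ∈ {i : ι | lam ≤ μT i})]
      rw [hadef]
      simp only [if_pos hi]
      have h1 : (μT i) ^ (ζ - 1) ≤ M := hMbd i hi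
      have h2 : (0:ℝ) ≤ (μT i) ^ (ζ - 1) := Real.rpow_nonneg (hμT i) _
      calc ((μT i) ^ (ζ - 1) * c i) ^ 2 = ((μT i) ^ (ζ - 1)) ^ 2 * c i ^ 2 := by ring
        _ ≤ M ^ 2 * c i ^ 2 :=
            mul_le_mul_of_nonneg_right (pow_le_pow_left₀ h2 h1 2) (sq_nonneg _)
    · rw [Set.indicator_of_notMem (by exact hi : i ∉ {i : ι | lam ≤ μT i})]
      rw [hadef]
      simp [if_neg hi]
  have hIndS : Summable (Set.indicator {i : ι | lam ≤ μT i} (fun i => c i ^ 2)) := by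
    rw [← summable_subtype_iff_indicator]
    exact hBesselS
  have haS : Summable (fun i => a i ^ 2) :=
    Summable.of_nonneg_of_le (fun i => sq_nonneg _) haptbd (hIndS.mul_left (M ^ 2))
  have hamem : Memℓp a 2 := by
    apply memℓp_gen
    have hconv : ∀ i : ι, ‖a i‖ ^ (2 : ENNReal).toReal = a i ^ 2 := by
      intro i
      have : (2 : ENNReal).toReal = ((2:ℕ):ℝ) := by norm_num
      rw [this, Real.rpow_natCast, Real.norm_eq_abs, sq_abs]
    rw [funext hconv]
    exact haS
  set hvec : H := e.repr.symm ⟨a, hamem⟩ with hhvec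
  have hvcoef : ∀ i, ⟪e i, hvec⟫ = a i := by
    intro i
    rw [← e.repr_apply_apply, hhvec, LinearIsometryEquiv.apply_symm_apply]
  have hωvec : sT hvec = ωstar := by
    refine basis_ext e fun i => ?_
    rw [diag_inner e hsT hvec i, hvcoef, hωc i, hadef]
    by_cases hi : lam ≤ μT i
    · simp only [if_pos hi]
      ring
    · simp only [if_neg hi]
      ring
  have hvecnorm : ∀ D : ℝ, 0 ≤ D → (∀ i, lam ≤ μT i → (μT i) ^ (ζ - 1) ≤ D) →
      ‖hvec‖ ≤ D * R := by
    intro D hD0 hD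
    have hps := parseval e hvec
    simp only [hvcoef] at hps
    have hpt : ∀ i, a i ^ 2 ≤
        Set.indicator {i : ι | lam ≤ μT i} (fun i => D ^ 2 * c i ^ 2) i := by
      intro i
      by_cases hi : lam ≤ μT i
      · rw [Set.indicator_of_mem (by exact hi : i ∈ {i : ι | lam ≤ μT i})]
        rw [hadef]
        simp only [if_pos hi]
        have h1 : (μT i) ^ (ζ - 1) ≤ D := hD i hi
        have h2 : (0:ℝ) ≤ (μT i) ^ (ζ - 1) := Real.rpow_nonneg (hμT i) _
        calc ((μT i) ^ (ζ - 1) * c i) ^ 2 = ((μT i) ^ (ζ - 1)) ^ 2 * c i ^ 2 := by ring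
          _ ≤ D ^ 2 * c i ^ 2 :=
              mul_le_mul_of_nonneg_right (pow_le_pow_left₀ h2 h1 2) (sq_nonneg _)
      · rw [Set.indicator_of_notMem (by exact hi : i ∉ {i : ι | lam ≤ μT i})]
        rw [hadef]
        simp [if_neg hi]
    have hIndS2 : Summable (Set.indicator {i : ι | lam ≤ μT i} (fun i => D ^ 2 * c i ^ 2)) := by
      rw [← summable_subtype_iff_indicator]
      exact hBesselS.mul_left (D ^ 2)
    have h2 : ‖hvec‖ ^ 2 ≤ D ^ 2 * R ^ 2 := by
      have h3 : ‖hvec‖ ^ 2 = ∑' i, a i ^ 2 := hps.tsum_eq.symm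
      have h4 : ∑' i, a i ^ 2 ≤
          ∑' i, Set.indicator {i : ι | lam ≤ μT i} (fun i => D ^ 2 * c i ^ 2) i :=
        Summable.tsum_le_tsum hpt hps.summable hIndS2
      have h5 : ∑' i, Set.indicator {i : ι | lam ≤ μT i} (fun i => D ^ 2 * c i ^ 2) i
          = D ^ 2 * ∑' (i : {i : ι // lam ≤ μT i}), (c i.1) ^ 2 := by
        rw [← tsum_subtype {i : ι | lam ≤ μT i} (fun i => D ^ 2 * c i ^ 2)]
        exact tsum_mul_left
      have h6 : D ^ 2 * ∑' (i : {i : ι // lam ≤ μT i}), (c i.1) ^ 2 ≤ D ^ 2 * R ^ 2 :=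
        mul_le_mul_of_nonneg_left hBesselB (by positivity)
      rw [h3]
      exact (h4.trans (le_of_eq h5)).trans h6
    have h7 : ‖hvec‖ ^ 2 ≤ (D * R) ^ 2 := by nlinarith
    exact (pow_le_pow_iff_left₀ (norm_nonneg _) (by positivity) two_ne_zero).mp h7
  -- norm bounds on (I-P)ωstar
  have hQω1 : ‖Q ωstar‖ ≤ N5 * ‖hvec‖ := by
    rw [← hωvec]
    calc ‖Q (sT hvec)‖ = ‖(Q.comp sT) hvec‖ := by rw [ContinuousLinearMap.comp_apply]
      _ ≤ ‖Q.comp sT‖ * ‖hvec‖ := ContinuousLinearMap.le_opNorm _ _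
      _ = N5 * ‖hvec‖ := by rw [hQsT]
  have hsTQω : ‖sT (Q ωstar)‖ ≤ N5 * ‖Q ωstar‖ := by
    have h1 : sT (Q ωstar) = (sT.comp Q) (Q ωstar) := by
      rw [ContinuousLinearMap.comp_apply, hQQ]
    rw [h1]
    exact ContinuousLinearMap.le_opNorm _ _
  -- decomposition
  have hw0 : (ContinuousLinearMap.adjoint Sx) ybar - Tx (P ωstar)
      = ((ContinuousLinearMap.adjoint Sx) ybar - Tx ωstar) + Tx (Q ωstar) := by
    have hQω : Q ωstar = ωstar - P ωstar := by
      rw [hQdef]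
      simp [ContinuousLinearMap.sub_apply]
    rw [hQω, map_sub]
    abel
  have hfirst : ‖rTxlam ((ContinuousLinearMap.adjoint Sx) ybar - Tx ωstar)‖
      ≤ Δ1 ^ (1/2 : ℝ) * Δ2 := by
    refine (key1 _).trans ?_
    refine mul_le_mul_of_nonneg_left (le_of_eq ?_) hΔ1pos
    rw [hΔ2]
    rw [show rTlam ((ContinuousLinearMap.adjoint Sx) ybar - Tx ωstar)
        = -(rTlam (Tx ωstar - (ContinuousLinearMap.adjoint Sx) ybar)) by
      rw [← map_neg]; congr 1; abel]
    rw [norm_neg]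
  have hN5nn : (0:ℝ) ≤ N5 := norm_nonneg _
  constructor
  · -- case ζ ≤ 1
    intro hz
    set D : ℝ := lam ^ (ζ - 1) with hDdef
    have hD0 : (0:ℝ) ≤ D := Real.rpow_nonneg hlam.le _
    have hDbd : ∀ i, lam ≤ μT i → (μT i) ^ (ζ - 1) ≤ D := fun i hi =>
      Real.rpow_le_rpow_of_nonpos hlam hi (by linarith)
    have hhv : ‖hvec‖ ≤ D * R := hvecnorm D hD0 hDbd
    have hQωb : ‖Q ωstar‖ ≤ N5 * (D * R) :=
      hQω1.trans (mul_le_mul_of_nonneg_left hhv hN5nn)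
    have hsecond : ‖rTxlam (Tx (Q ωstar))‖
        ≤ Δ1 ^ (1/2 : ℝ) * ((Δ5 + lam) * (D * R)) := by
      refine (cmp_x _).trans ((key2 _).trans ?_)
      refine mul_le_mul_of_nonneg_left ?_ hΔ1pos
      have e1 : ‖sT (Q ωstar)‖ ^ 2 ≤ N5 ^ 2 * ‖Q ωstar‖ ^ 2 := by
        nlinarith [hsTQω, norm_nonneg (sT (Q ωstar)), norm_nonneg (Q ωstar)]
      have e2 : ‖sTlam (Q ωstar)‖ ^ 2 ≤ (N5 ^ 2 + lam) * ‖Q ωstar‖ ^ 2 := by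
        rw [split]
        nlinarith [norm_nonneg (Q ωstar)]
      have e3 : ‖Q ωstar‖ ^ 2 ≤ (N5 * (D * R)) ^ 2 := by
        nlinarith [norm_nonneg (Q ωstar)]
      have e3' : (N5 ^ 2 + lam) * ‖Q ωstar‖ ^ 2 ≤ (N5 ^ 2 + lam) * (N5 * (D * R)) ^ 2 :=
        mul_le_mul_of_nonneg_left e3 (by positivity)
      have e6 : (N5 ^ 2 + lam) * (N5 * (D * R)) ^ 2 ≤ ((N5 ^ 2 + lam) * (D * R)) ^ 2 := by
        nlinarith [mul_nonneg (mul_nonneg (add_nonneg (sq_nonneg N5) hlam.le) hlam.le)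
          (sq_nonneg (D * R))]
      have e4 : ‖sTlam (Q ωstar)‖ ^ 2 ≤ ((N5 ^ 2 + lam) * (D * R)) ^ 2 :=
        e2.trans (e3'.trans e6)
      have e5 : ‖sTlam (Q ωstar)‖ ≤ (N5 ^ 2 + lam) * (D * R) := by
        refine (pow_le_pow_iff_left₀ (norm_nonneg _) ?_ two_ne_zero).mp e4
        positivity
      rw [hΔ5N]
      exact e5
    calc ‖rTxlam ((ContinuousLinearMap.adjoint Sx) ybar - Tx (P ωstar))‖
        = ‖rTxlam ((ContinuousLinearMap.adjoint Sx) ybar - Tx ωstar)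
            + rTxlam (Tx (Q ωstar))‖ := by rw [← map_add, ← hw0]
      _ ≤ ‖rTxlam ((ContinuousLinearMap.adjoint Sx) ybar - Tx ωstar)‖
            + ‖rTxlam (Tx (Q ωstar))‖ := norm_add_le _ _
      _ ≤ Δ1 ^ (1/2 : ℝ) * Δ2 + Δ1 ^ (1/2 : ℝ) * ((Δ5 + lam) * (D * R)) :=
            add_le_add hfirst hsecond
      _ = Δ1 ^ (1/2 : ℝ) * Δ2 + Δ1 ^ (1/2 : ℝ) * R * (Δ5 + lam) * lam ^ (ζ - 1) := by
            rw [hDdef]; ring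
  · -- case 1 < ζ
    intro hz
    set D : ℝ := κ ^ (2 * (ζ - 1)) with hDdef
    have hD0 : (0:ℝ) ≤ D := Real.rpow_nonneg hκ0.le _
    have hDbd : ∀ i, lam ≤ μT i → (μT i) ^ (ζ - 1) ≤ D := by
      intro i hi
      have h1 : (μT i) ^ (ζ - 1) ≤ (κ ^ 2) ^ (ζ - 1) :=
        Real.rpow_le_rpow (hμT i) (hμκ i) (by linarith)
      refine h1.trans (le_of_eq ?_)
      rw [hDdef, ← Real.rpow_natCast κ 2, ← Real.rpow_mul hκ0.le]
      norm_num
    have hhv : ‖hvec‖ ≤ D * R := hvecnorm D hD0 hDbd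
    have hωnorm : ‖ωstar‖ ≤ κ * (D * R) := by
      rw [← hωvec]
      have h1 : ‖sT hvec‖ ≤ κ * ‖hvec‖ := by
        refine diag_norm_le_const e hsT hκ0.le (fun i => ?_) hvec
        rw [abs_of_nonneg (Real.sqrt_nonneg _)]
        have h2 : Real.sqrt (μT i) ≤ Real.sqrt (κ ^ 2) := Real.sqrt_le_sqrt (hμκ i)
        rwa [Real.sqrt_sq hκ0.le] at h2
      exact h1.trans (mul_le_mul_of_nonneg_left hhv hκ0.le)
    have hQωb : ‖Q ωstar‖ ≤ κ * (D * R) := (hQcontr ωstar).trans hωnorm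
    have hQωb2 : ‖Q ωstar‖ ≤ N5 * (D * R) :=
      hQω1.trans (mul_le_mul_of_nonneg_left hhv hN5nn)
    have hdecomp : Tx (Q ωstar) = (Tx - T) (Q ωstar) + T (Q ωstar) := by
      have h9 : (Tx - T) (Q ωstar) = Tx (Q ωstar) - T (Q ωstar) := rfl
      rw [h9]
      abel
    have hA : ‖rTxlam ((Tx - T) (Q ωstar))‖
        ≤ Δ1 ^ (1/2 : ℝ) * (Δ4 * (κ * (D * R))) := by
      refine (key1 _).trans ?_
      refine mul_le_mul_of_nonneg_left ?_ hΔ1pos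
      have h1 : rTlam ((Tx - T) (Q ωstar)) = -((rTlam.comp (T - Tx)) (Q ωstar)) := by
        rw [ContinuousLinearMap.comp_apply, ← map_neg]
        congr 1
        have h9 : (Tx - T) (Q ωstar) = Tx (Q ωstar) - T (Q ωstar) := rfl
        have h9' : (T - Tx) (Q ωstar) = T (Q ωstar) - Tx (Q ωstar) := rfl
        rw [h9, h9']
        abel
      rw [h1, norm_neg]
      calc ‖(rTlam.comp (T - Tx)) (Q ωstar)‖ ≤ ‖rTlam.comp (T - Tx)‖ * ‖Q ωstar‖ :=
            ContinuousLinearMap.le_opNorm _ _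
        _ = Δ4 * ‖Q ωstar‖ := by rw [hΔ4]
        _ ≤ Δ4 * (κ * (D * R)) := by
            refine mul_le_mul_of_nonneg_left hQωb ?_
            rw [hΔ4]; exact norm_nonneg _
    have hB : ‖rTxlam (T (Q ωstar))‖ ≤ Δ1 ^ (1/2 : ℝ) * (Δ5 * (D * R)) := by
      refine (key1 _).trans ?_
      refine mul_le_mul_of_nonneg_left ((cmp_T _).trans ?_) hΔ1pos
      calc ‖sT (Q ωstar)‖ ≤ N5 * ‖Q ωstar‖ := hsTQω
        _ ≤ N5 * (N5 * (D * R)) := mul_le_mul_of_nonneg_left hQωb2 hN5nn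
        _ = Δ5 * (D * R) := by rw [hΔ5N]; ring
    calc ‖rTxlam ((ContinuousLinearMap.adjoint Sx) ybar - Tx (P ωstar))‖
        = ‖rTxlam ((ContinuousLinearMap.adjoint Sx) ybar - Tx ωstar)
            + (rTxlam ((Tx - T) (Q ωstar)) + rTxlam (T (Q ωstar)))‖ := by
          rw [← map_add, ← map_add, ← hdecomp, ← hw0]
      _ ≤ ‖rTxlam ((ContinuousLinearMap.adjoint Sx) ybar - Tx ωstar)‖
            + (‖rTxlam ((Tx - T) (Q ωstar))‖ + ‖rTxlam (T (Q ωstar))‖) :=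
          (norm_add_le _ _).trans (by gcongr; exact norm_add_le _ _)
      _ ≤ Δ1 ^ (1/2 : ℝ) * Δ2
            + (Δ1 ^ (1/2 : ℝ) * (Δ4 * (κ * (D * R))) + Δ1 ^ (1/2 : ℝ) * (Δ5 * (D * R))) :=
          add_le_add hfirst (add_le_add hA hB)
      _ = Δ1 ^ (1/2 : ℝ) * Δ2 + Δ1 ^ (1/2 : ℝ) * R * (κ * Δ4 + Δ5) * κ ^ (2 * (ζ - 1)) := by
          rw [hDdef]; ring
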